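/- Let β ∈ (0,1] and ν > 0, and define Ũ_{1,β,ν}(x) = (1/(β²Γ(ν))) ∫_0^∞ t^{ν/β−2} exp(−t^{1/β} − x/(βt)) dt for x > 0. Then for every real s with s > 0 and β(s−1)+ν > 0, the Mellin transform satisfies ∫_0^∞ x^{s−1} Ũ_{1,β,ν}(x) dx = β^{s−1} · Γ(s) · Γ(β(s−1)+ν) / Γ(ν). -/

import Mathlib

open MeasureTheory

/-- The weight function `Ũ_{1,β,ν}` for the Wright case `α = 1`. -/
noncomputable def wrightWeight (β ν : ℝ) (x : ℝ) : ℝ :=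
  (1 / (β ^ 2 * Real.Gamma ν)) *
    ∫ t in Set.Ioi (0 : ℝ), t ^ (ν / β - 2) * Real.exp (-(t ^ (1 / β)) - x / (β * t))

namespace WrightAux

noncomputable def F (β ν s x t : ℝ) : ℝ :=
  x ^ (s - 1) * (t ^ (ν / β - 2) * Real.exp (-(t ^ (1 / β)) - x / (β * t)))

lemma F_meas (β ν s : ℝ) : Measurable (Function.uncurry (F β ν s)) := by
  unfold F Function.uncurry
  fun_prop

lemma F_eq (β ν s : ℝ) (hβ0 : 0 < β) (x t : ℝ) (ht : 0 < t) :
    F β ν s x t = (t ^ (ν / β - 2) * Real.exp (-(t ^ (1 / β)))) *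
      (x ^ (s - 1) * Real.exp (-(1 / (β * t)) * x)) := by
  have hβt : (0:ℝ) < β * t := mul_pos hβ0 ht
  have harg : -(t ^ (1 / β)) - x / (β * t) = (-(t ^ (1 / β))) + (-(1 / (β * t)) * x) := by
    field_simp; ring
  rw [F, harg, Real.exp_add]; ring

lemma F_nonneg (β ν s x t : ℝ) (hx : 0 ≤ x) (ht : 0 ≤ t) : 0 ≤ F β ν s x t := by
  unfold F
  have := Real.rpow_nonneg hx (s - 1)
  have := Real.rpow_nonneg ht (ν / β - 2)
  positivity

lemma F_integrableOn (β ν s : ℝ) (hβ0 : 0 < β) (hs : 0 < s) (t : ℝ) (ht : 0 < t) :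
    IntegrableOn (fun x => F β ν s x t) (Set.Ioi (0:ℝ)) := by
  have hβt : (0:ℝ) < β * t := mul_pos hβ0 ht
  have hb : (0:ℝ) < 1 / (β * t) := by positivity
  have h := (integrableOn_rpow_mul_exp_neg_mul_rpow (by linarith : (-1:ℝ) < s - 1)
    one_pos hb).const_mul (t ^ (ν / β - 2) * Real.exp (-(t ^ (1 / β))))
  refine h.congr ?_
  filter_upwards [ae_restrict_mem measurableSet_Ioi] with x _
  rw [F_eq β ν s hβ0 x t ht, Real.rpow_one, neg_mul]

lemma F_inner (β ν s : ℝ) (hβ0 : 0 < β) (hs : 0 < s) (t : ℝ) (ht : 0 < t) :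
    ∫ x in Set.Ioi (0:ℝ), F β ν s x t =
      (t ^ (ν / β - 2) * Real.exp (-(t ^ (1 / β)))) * ((β * t) ^ s * Real.Gamma s) := by
  have hβt : (0:ℝ) < β * t := mul_pos hβ0 ht
  have hb : (0:ℝ) < 1 / (β * t) := by positivity
  simp_rw [F_eq β ν s hβ0 _ t ht, neg_mul]
  rw [MeasureTheory.integral_const_mul, Real.integral_rpow_mul_exp_neg_mul_Ioi hs hb,
    one_div_one_div]

end WrightAux

open WrightAux in
theorem wrightWeight_mellin (β ν : ℝ) (hβ0 : 0 < β) (hβ1 : β ≤ 1) (hν : 0 < ν)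
    (s : ℝ) (hs : 0 < s) (hs2 : 0 < β * (s - 1) + ν) :
    (∫ x in Set.Ioi (0 : ℝ), x ^ (s - 1) * wrightWeight β ν x) =
      β ^ (s - 1) * Real.Gamma s * Real.Gamma (β * (s - 1) + ν) / Real.Gamma ν := by
  have hβ : (β:ℝ) ≠ 0 := hβ0.ne'
  have hΓν : Real.Gamma ν ≠ 0 := (Real.Gamma_pos_of_pos hν).ne'
  have hp1 : (1:ℝ) ≤ 1 / β := by rw [le_div_iff₀ hβ0]; linarith
  have hp0 : (0:ℝ) < 1 / β := by positivity
  have hq : (-1:ℝ) < ν / β - 2 + s := by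
    have h := div_pos hs2 hβ0
    rw [add_div, mul_div_cancel_left₀ _ hβ] at h
    linarith
  -- rearrangement of the inner-integral value
  have hval : ∀ t ∈ Set.Ioi (0:ℝ),
      (t ^ (ν / β - 2) * Real.exp (-(t ^ (1 / β)))) * ((β * t) ^ s * Real.Gamma s) =
        β ^ s * Real.Gamma s * (t ^ (ν / β - 2 + s) * Real.exp (-(t ^ (1 / β)))) := by
    intro t ht
    rw [Real.mul_rpow hβ0.le (le_of_lt ht), Real.rpow_add ht]
    ring
  -- integrability of the "outer" majorant
  have houter : IntegrableOn
      (fun t : ℝ => β ^ s * Real.Gamma s * (t ^ (ν / β - 2 + s) * Real.exp (-(t ^ (1 / β)))))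
      (Set.Ioi (0:ℝ)) :=
    (integrableOn_rpow_mul_exp_neg_rpow hq hp0).const_mul _
  -- the product integrability
  have hmeas : AEStronglyMeasurable (Function.uncurry (F β ν s))
      ((volume.restrict (Set.Ioi (0:ℝ))).prod (volume.restrict (Set.Ioi (0:ℝ)))) :=
    (F_meas β ν s).aestronglyMeasurable
  have hInt : Integrable (Function.uncurry (F β ν s))
      ((volume.restrict (Set.Ioi (0:ℝ))).prod (volume.restrict (Set.Ioi (0:ℝ)))) := by
    rw [integrable_prod_iff' hmeas]
    refine ⟨?_, ?_⟩
    · filter_upwards [ae_restrict_mem measurableSet_Ioi] with t ht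
      exact F_integrableOn β ν s hβ0 hs t ht
    · refine houter.congr ?_
      filter_upwards [ae_restrict_mem measurableSet_Ioi] with t ht
      have h1 : ∫ x in Set.Ioi (0:ℝ), ‖Function.uncurry (F β ν s) (x, t)‖ =
          ∫ x in Set.Ioi (0:ℝ), F β ν s x t := by
        refine setIntegral_congr_fun measurableSet_Ioi (fun x hx => ?_)
        exact Real.norm_of_nonneg (F_nonneg β ν s x t (le_of_lt hx) (le_of_lt ht))
      rw [h1, F_inner β ν s hβ0 hs t ht, hval t ht]
  -- main computation
  calc (∫ x in Set.Ioi (0 : ℝ), x ^ (s - 1) * wrightWeight β ν x)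
      = ∫ x in Set.Ioi (0:ℝ), (1 / (β ^ 2 * Real.Gamma ν)) * ∫ t in Set.Ioi (0:ℝ), F β ν s x t := by
        refine setIntegral_congr_fun measurableSet_Ioi (fun x hx => ?_)
        rw [wrightWeight, mul_left_comm, ← MeasureTheory.integral_const_mul]
        rfl
    _ = (1 / (β ^ 2 * Real.Gamma ν)) *
          ∫ x in Set.Ioi (0:ℝ), ∫ t in Set.Ioi (0:ℝ), F β ν s x t :=
        MeasureTheory.integral_const_mul _ _
    _ = (1 / (β ^ 2 * Real.Gamma ν)) *
          ∫ t in Set.Ioi (0:ℝ), ∫ x in Set.Ioi (0:ℝ), F β ν s x t := by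
        rw [integral_integral_swap hInt]
    _ = (1 / (β ^ 2 * Real.Gamma ν)) *
          ∫ t in Set.Ioi (0:ℝ), β ^ s * Real.Gamma s *
            (t ^ (ν / β - 2 + s) * Real.exp (-(t ^ (1 / β)))) := by
        congr 1
        refine setIntegral_congr_fun measurableSet_Ioi (fun t ht => ?_)
        rw [F_inner β ν s hβ0 hs t ht, hval t ht]
    _ = (1 / (β ^ 2 * Real.Gamma ν)) * (β ^ s * Real.Gamma s *
          ((1 / (1 / β)) * Real.Gamma ((ν / β - 2 + s + 1) / (1 / β)))) := by
        rw [MeasureTheory.integral_const_mul, integral_rpow_mul_exp_neg_rpow hp0 hq]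
    _ = β ^ (s - 1) * Real.Gamma s * Real.Gamma (β * (s - 1) + ν) / Real.Gamma ν := by
        rw [one_div_one_div]
        have harg : (ν / β - 2 + s + 1) / (1 / β) = β * (s - 1) + ν := by
          field_simp; ring
        have hpow : β ^ (s - 1) * β = β ^ s := by
          rw [Real.rpow_sub hβ0, Real.rpow_one, div_mul_cancel₀ _ hβ]
        rw [harg, ← hpow]
        field_simp
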